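/- For every n ≥ 1, the polynomial α_n(x_1,…,x_n) = ∑ x_1^{i_1} x_2^{i_2} ⋯ x_n^{i_n} + x_1 ∈ F_4[x_1,…,x_n], where the sum ranges over all exponent tuples with 0 ≤ i_j ≤ 3 for each j and i_1 + ⋯ + i_n ≤ 3n − 1, is a permutation polynomial of F_4[x_1,…,x_n] of total degree 3n − 1. -/

import Mathlib

open MvPolynomial Finset

set_option linter.unusedSectionVars false

namespace PPF4

variable {F : Type*} [Field F] [Fintype F] [DecidableEq F]

lemma char2 (hF : Fintype.card F = 4) : (2 : F) = 0 := by
  have hc : CharP F (ringChar F) := ringChar.charP F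
  obtain ⟨k, hp, hcard⟩ := FiniteField.card F (ringChar F)
  have hdvd : ringChar F ∣ 4 := by
    rw [← hF, hcard]; exact dvd_pow_self _ (by positivity)
  have h2 : ringChar F = 2 := by
    have : ringChar F ∣ 2 := hp.dvd_of_dvd_pow (n := 2) (by norm_num at hdvd ⊢; exact hdvd)
    exact (Nat.prime_dvd_prime_iff_eq hp Nat.prime_two).mp this
  have := CharP.cast_eq_zero F (ringChar F)
  rw [h2] at this
  exact_mod_cast this

lemma pow4 (hF : Fintype.card F = 4) (x : F) : x ^ 4 = x := by
  have := FiniteField.pow_card x; rwa [hF] at this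

lemma cube (hF : Fintype.card F = 4) (x : F) : x ^ 3 = if x = 0 then 0 else 1 := by
  split
  · simp_all
  · next h =>
    have := FiniteField.pow_card_sub_one_eq_one x h
    rw [hF] at this; exact this

lemma geom (hF : Fintype.card F = 4) (x : F) :
    (1 : F) + x + x ^ 2 + x ^ 3 = if x = 1 then 0 else 1 := by
  have h2 := char2 hF
  split
  · next h => subst h; linear_combination 2 * h2
  · next h =>
    have hx1 : x + 1 ≠ 0 := by
      intro hc; exact h (by linear_combination hc - h2)
    apply mul_left_cancel₀ hx1
    have h4 := pow4 hF x
    linear_combination h4 + (x^3 + x^2 + x) * h2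

lemma filter_eq {n : ℕ} (hn : 0 < n) :
    (Finset.univ.filter (fun e : Fin n → Fin 4 => ∑ j, (e j : ℕ) ≤ 3 * n - 1)) =
      Finset.univ.erase (fun _ => (3 : Fin 4)) := by
  rw [← Finset.filter_ne']
  apply Finset.filter_congr
  intro e _
  have key : ∑ j, (3 - (e j : ℕ)) + ∑ j, (e j : ℕ) = 3 * n := by
    rw [← Finset.sum_add_distrib]
    have : ∀ j : Fin n, 3 - (e j : ℕ) + (e j : ℕ) = 3 := by
      intro j; have := (e j).is_le; omega
    simp [this, Finset.sum_const, mul_comm]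
  have hzero : (∑ j, (3 - (e j : ℕ)) = 0) ↔ e = (fun _ => (3 : Fin 4)) := by
    rw [Finset.sum_eq_zero_iff]
    constructor
    · intro h; funext j
      have := h j (Finset.mem_univ j)
      have hle := (e j).is_le
      have : (e j : ℕ) = 3 := by omega
      exact Fin.ext this
    · intro h; subst h; intro j _; rfl
  constructor
  · intro h hc
    have h0 := hzero.mpr hc
    omega
  · intro h
    have : ∑ j, (3 - (e j : ℕ)) ≠ 0 := fun hc => h (hzero.mp hc)
    omega

lemma eval_alpha {n : ℕ} (hF : Fintype.card F = 4) (hn : 0 < n)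
    (α : MvPolynomial (Fin n) F)
    (hα : α = (∑ e ∈ Finset.univ.filter
        (fun e : Fin n → Fin 4 => ∑ j, (e j : ℕ) ≤ 3 * n - 1),
        ∏ j, X j ^ (e j : ℕ)) + X (⟨0, hn⟩ : Fin n)) (x : Fin n → F) :
    eval x α = (if ∀ j, x j ≠ 1 then 1 else 0) + (if ∀ j, x j ≠ 0 then 1 else 0)
      + x ⟨0, hn⟩ := by
  have h2 : (2 : F) = 0 := char2 hF
  rw [hα, map_add, eval_X]
  congr 1
  rw [map_sum, filter_eq hn]
  have hterm : ∀ e : Fin n → Fin 4,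
      eval x (∏ j, (X j : MvPolynomial (Fin n) F) ^ (e j : ℕ)) = ∏ j, x j ^ (e j : ℕ) := by
    intro e; simp [eval_prod]
  have hsum : ∑ e ∈ Finset.univ.erase (fun _ => (3 : Fin 4)),
        eval x (∏ j, (X j : MvPolynomial (Fin n) F) ^ (e j : ℕ))
        + ∏ j, x j ^ ((3 : Fin 4) : ℕ) = ∑ e : Fin n → Fin 4, ∏ j, x j ^ (e j : ℕ) := by
    rw [Finset.sum_congr rfl (fun e _ => hterm e)]
    exact Finset.sum_erase_add _ _ (Finset.mem_univ _)
  have hall : ∑ e : Fin n → Fin 4, ∏ j, x j ^ (e j : ℕ)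
      = (if ∀ j, x j ≠ 1 then 1 else 0) := by
    have hps := Finset.prod_univ_sum (fun _ : Fin n => (univ : Finset (Fin 4)))
      (fun j i => x j ^ (i : ℕ))
    rw [Fintype.piFinset_univ] at hps
    rw [← hps]
    have : ∀ j : Fin n, ∑ i : Fin 4, x j ^ (i : ℕ) = if x j = 1 then 0 else 1 := by
      intro j
      rw [Fin.sum_univ_four]
      simpa using geom hF (x j)
    rw [Finset.prod_congr rfl (fun j _ => this j)]
    by_cases h : ∀ j, x j ≠ 1
    · rw [if_pos h]; exact Finset.prod_eq_one (fun j _ => if_neg (h j))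
    · rw [if_neg h]; push_neg at h; obtain ⟨j, hj⟩ := h
      exact Finset.prod_eq_zero (Finset.mem_univ j) (if_pos hj)
  have hcube : ∏ j : Fin n, x j ^ ((3 : Fin 4) : ℕ) = (if ∀ j, x j ≠ 0 then 1 else 0) := by
    have : ∀ j : Fin n, x j ^ ((3 : Fin 4) : ℕ) = if x j = 0 then 0 else 1 := by
      intro j; exact cube hF (x j)
    rw [Finset.prod_congr rfl (fun j _ => this j)]
    by_cases h : ∀ j, x j ≠ 0
    · rw [if_pos h]; exact Finset.prod_eq_one (fun j _ => if_neg (h j))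
    · rw [if_neg h]; push_neg at h; obtain ⟨j, hj⟩ := h
      exact Finset.prod_eq_zero (Finset.mem_univ j) (if_pos hj)
  rw [hall, hcube] at hsum
  linear_combination hsum - (if ∀ j, x j ≠ 0 then (1:F) else 0) * h2

variable {m : ℕ}

/-- the one-variable slice function -/
def g (t : Fin m → F) (x0 : F) : F :=
  (if x0 ≠ 1 ∧ ∀ j, t j ≠ 1 then 1 else 0) +
  (if x0 ≠ 0 ∧ ∀ j, t j ≠ 0 then 1 else 0) + x0

lemma g_cases (hF : Fintype.card F = 4) (t : Fin m → F) (x0 : F) :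
    g t x0 = x0 ∨ g t x0 = x0 + 1 := by
  have h2 : (2 : F) = 0 := char2 hF
  unfold g
  split <;> split
  · left; linear_combination h2
  · right; ring
  · right; ring
  · left; ring

lemma g_shift (hF : Fintype.card F = 4) (t : Fin m → F) (x0 : F) :
    g (t + 1) (x0 + 1) = g t x0 + 1 := by
  have h2 : (2 : F) = 0 := char2 hF
  have e0 : ∀ y : F, y + 1 = 0 ↔ y = 1 := by
    intro y; constructor <;> intro h
    · linear_combination h - h2
    · linear_combination h + h2
  have e1 : ∀ y : F, y + 1 = 1 ↔ y = 0 := by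
    intro y; constructor <;> intro h <;> linear_combination h
  unfold g
  simp only [Pi.add_apply, Pi.one_apply, ne_eq, e0, e1]
  ring

/-- fiber count of the slice -/
def N (t : Fin m → F) (a : F) : ℕ := (Finset.univ.filter (fun x0 : F => g t x0 = a)).card

lemma N_pair (hF : Fintype.card F = 4) (t : Fin m → F) (a : F) :
    N t a + N t (a + 1) = 2 := by
  have h2 : (2 : F) = 0 := char2 hF
  have hne : a ≠ a + 1 := by
    intro h; exact one_ne_zero (α := F) (by linear_combination -h)
  unfold N
  rw [← Finset.card_union_of_disjoint]
  · rw [← Finset.filter_or]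
    have : Finset.univ.filter (fun x0 : F => g t x0 = a ∨ g t x0 = a + 1) = {a, a + 1} := by
      ext x
      simp only [Finset.mem_filter, Finset.mem_univ, true_and, Finset.mem_insert,
        Finset.mem_singleton]
      constructor
      · rintro (h | h) <;> rcases g_cases hF t x with hg | hg <;> rw [hg] at h
        · left; exact h
        · right; linear_combination h - h2
        · right; exact h
        · left; linear_combination h
      · rintro (h | h) <;> rcases g_cases hF t x with hg | hg
        · left; rw [hg]; exact h
        · right; rw [hg, h]
        · right; rw [hg]; exact h
        · left; rw [hg, h]; linear_combination h2
    rw [this, Finset.card_insert_of_notMem (by simpa using hne), Finset.card_singleton]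
  · rw [Finset.disjoint_filter]
    intro x _ hx hx'
    exact hne (hx ▸ hx')

lemma N_shift (hF : Fintype.card F = 4) (t : Fin m → F) (a : F) :
    N (t + 1) a = N t (a + 1) := by
  have h2 : (2 : F) = 0 := char2 hF
  have hinv : ∀ y : F, y + 1 + 1 = y := by intro y; linear_combination h2
  unfold N
  refine Finset.card_nbij' (fun x => x + 1) (fun x => x + 1) ?_ ?_
    (fun x _ => hinv x) (fun x _ => hinv x)
  · intro x hx
    simp only [Finset.mem_coe, Finset.mem_filter, Finset.mem_univ, true_and] at hx ⊢
    have h := g_shift hF t (x + 1)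
    rw [hinv x, hx] at h
    linear_combination -h - h2
  · intro x hx
    simp only [Finset.mem_coe, Finset.mem_filter, Finset.mem_univ, true_and] at hx ⊢
    rw [g_shift hF, hx, hinv]

lemma sum_N (hF : Fintype.card F = 4) (a : F) : ∑ t : Fin m → F, N t a = 4 ^ m := by
  have hre : ∑ t : Fin m → F, N (t + 1) a = ∑ t : Fin m → F, N t a :=
    Equiv.sum_comp (Equiv.addRight (1 : Fin m → F)) (fun t => N t a)
  have h2 : ∀ t : Fin m → F, N t a + N (t + 1) a = 2 := by
    intro t; rw [N_shift hF]; exact N_pair hF t a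
  have : (∑ t : Fin m → F, N t a) + (∑ t : Fin m → F, N t a) = 2 * 4 ^ m := by
    nth_rewrite 1 [← hre]
    rw [← Finset.sum_add_distrib]
    calc ∑ t : Fin m → F, (N (t+1) a + N t a) = ∑ t : Fin m → F, 2 := by
          apply Finset.sum_congr rfl; intro t _; rw [add_comm]; exact h2 t
      _ = 2 * 4 ^ m := by
          rw [Finset.sum_const, Finset.card_univ]
          simp [Fintype.card_fun, hF, mul_comm]
  omega

lemma prodX {n : ℕ} (e : Fin n → Fin 4) :
    ∏ j, (X j : MvPolynomial (Fin n) F) ^ (e j : ℕ)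
      = monomial (Finsupp.equivFunOnFinite.symm (fun j => (e j : ℕ))) 1 := by
  rw [← prod_X_pow_eq_monomial]
  refine (Finset.prod_subset (Finset.subset_univ _) ?_).symm
  intro j _ hj
  have h0 : (Finsupp.equivFunOnFinite.symm (fun j => ((e j : ℕ)))) j = 0 :=
    Finsupp.notMem_support_iff.mp hj
  have : ((Finsupp.equivFunOnFinite.symm (fun j => ((e j : ℕ)))) j) = (e j : ℕ) := by
    simp
  rw [this] at h0
  simp [h0]

lemma sum_ite_val {n : ℕ} (i0 : Fin n) :
    ∑ j : Fin n, (if j = i0 then 2 else 3) + 1 = 3 * n := by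
  have h1 : ∑ j : Fin n, (if j = i0 then (1:ℕ) else 0) = 1 := by
    rw [Finset.sum_ite_eq' Finset.univ i0 (fun _ => (1:ℕ))]
    simp
  have : ∑ j : Fin n, ((if j = i0 then 2 else 3) : ℕ) + ∑ j : Fin n, (if j = i0 then (1:ℕ) else 0)
      = ∑ j : Fin n, 3 := by
    rw [← Finset.sum_add_distrib]
    refine Finset.sum_congr rfl fun j _ => ?_
    split <;> rfl
  rw [h1] at this
  simp only [Finset.sum_const, Finset.card_univ, Fintype.card_fin, smul_eq_mul] at this
  omega

lemma totdeg {n : ℕ} (hn : 0 < n)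
    (α : MvPolynomial (Fin n) F)
    (hα : α = (∑ e ∈ Finset.univ.filter
        (fun e : Fin n → Fin 4 => ∑ j, (e j : ℕ) ≤ 3 * n - 1),
        ∏ j, X j ^ (e j : ℕ)) + X (⟨0, hn⟩ : Fin n)) :
    α.totalDegree = 3 * n - 1 := by
  set i0 : Fin n := ⟨0, hn⟩ with hi0
  set c : Fin n →₀ ℕ := Finsupp.equivFunOnFinite.symm (fun j => if j = i0 then 2 else 3) with hc
  have hcval : ∀ j, c j = if j = i0 then 2 else 3 := by intro j; simp [hc]
  have hcsum : ∑ j, c j = 3 * n - 1 := by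
    have := sum_ite_val i0
    have h2 : ∑ j : Fin n, c j = ∑ j : Fin n, (if j = i0 then 2 else 3) :=
      Finset.sum_congr rfl fun j _ => hcval j
    omega
  have upper : α.totalDegree ≤ 3 * n - 1 := by
    rw [hα]
    refine le_trans (totalDegree_add _ _) (max_le ?_ ?_)
    · refine le_trans (totalDegree_finset_sum _ _) (Finset.sup_le ?_)
      intro e he
      rw [prodX, totalDegree_monomial _ (one_ne_zero)]
      rw [Finsupp.sum_fintype _ _ (fun _ => rfl)]
      have : ∀ j, (Finsupp.equivFunOnFinite.symm (fun j => ((e j : ℕ)))) j = (e j : ℕ) := by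
        intro j; simp
      rw [Finset.sum_congr rfl (fun j _ => this j)]
      exact (Finset.mem_filter.mp he).2
    · rw [totalDegree_X]
      omega
  set e0 : Fin n → Fin 4 := fun j => if j = i0 then 2 else 3 with he0
  have he0val : ∀ j, ((e0 j : ℕ)) = if j = i0 then 2 else 3 := by
    intro j
    simp only [he0]
    split <;> rfl
  have he0sum : ∑ j, (e0 j : ℕ) = 3 * n - 1 := by
    have := sum_ite_val i0
    have h2 : ∑ j : Fin n, (e0 j : ℕ) = ∑ j : Fin n, (if j = i0 then 2 else 3) :=
      Finset.sum_congr rfl fun j _ => he0val j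
    omega
  have he0mem : e0 ∈ Finset.univ.filter
      (fun e : Fin n → Fin 4 => ∑ j, (e j : ℕ) ≤ 3 * n - 1) := by
    simp only [Finset.mem_filter, Finset.mem_univ, true_and]
    omega
  have htoF : ∀ e : Fin n → Fin 4,
      Finsupp.equivFunOnFinite.symm (fun j => ((e j : ℕ))) = c ↔ e = e0 := by
    intro e
    constructor
    · intro h
      funext j
      have := DFunLike.congr_fun h j
      simp only [Finsupp.equivFunOnFinite_symm_apply_apply] at this
      rw [hcval j] at this
      apply Fin.ext
      rw [this, he0val j]
    · rintro rfl
      rw [hc]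
      exact congrArg _ (funext he0val)
  have hcoeff : coeff c α = 1 := by
    rw [hα, coeff_add]
    have hX : coeff c (X i0 : MvPolynomial (Fin n) F) = 0 := by
      rw [coeff_X', if_neg]
      intro h
      have := DFunLike.congr_fun h i0
      rw [hcval i0] at this
      simp at this
    rw [hX, add_zero, coeff_sum]
    have : ∀ e ∈ Finset.univ.filter
        (fun e : Fin n → Fin 4 => ∑ j, (e j : ℕ) ≤ 3 * n - 1),
        coeff c (∏ j, (X j : MvPolynomial (Fin n) F) ^ (e j : ℕ))
          = if e = e0 then 1 else 0 := by
      intro e _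
      rw [prodX, coeff_monomial]
      by_cases h : e = e0
      · rw [if_pos ((htoF e).mpr h), if_pos h]
      · rw [if_neg (fun hc => h ((htoF e).mp hc)), if_neg h]
    rw [Finset.sum_congr rfl this, Finset.sum_ite_eq' _ e0 (fun _ => (1:F))]
    rw [if_pos he0mem]
  have lower : 3 * n - 1 ≤ α.totalDegree := by
    have hmem : c ∈ α.support := by
      rw [mem_support_iff, hcoeff]; exact one_ne_zero
    have := le_totalDegree hmem
    rwa [Finsupp.sum_fintype _ _ (fun _ => rfl), hcsum] at this
  omega

end PPF4

open PPF4 in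
/-- Over `F_4`, the polynomial `α_n = ∑ x_1^{i_1} ⋯ x_n^{i_n} + x_1`, summed over all
exponent tuples with `0 ≤ i_j ≤ 3` and `i_1 + ⋯ + i_n ≤ 3n - 1`, is a permutation
polynomial of total degree `3n - 1`. -/
theorem pp_F4_all_monomials {F : Type*} [Field F] [Fintype F] [DecidableEq F]
    (hF : Fintype.card F = 4) {n : ℕ} (hn : 0 < n)
    (α : MvPolynomial (Fin n) F)
    (hα : α = (∑ e ∈ Finset.univ.filter
        (fun e : Fin n → Fin 4 => ∑ j, (e j : ℕ) ≤ 3 * n - 1),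
        ∏ j, X j ^ (e j : ℕ)) + X (⟨0, hn⟩ : Fin n)) :
    (∀ a : F,
      (Finset.univ.filter (fun x : Fin n → F => eval x α = a)).card = 4 ^ (n - 1)) ∧
    α.totalDegree = 3 * n - 1 := by
  refine ⟨?_, totdeg hn α hα⟩
  intro a
  obtain ⟨m, rfl⟩ : ∃ m, n = m + 1 := ⟨n - 1, by omega⟩
  have hzero : (⟨0, hn⟩ : Fin (m + 1)) = 0 := Fin.ext (by simp)
  have hcons : ∀ (x0 : F) (t : Fin m → F), eval (Fin.cons x0 t) α = g t x0 := by
    intro x0 t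
    rw [eval_alpha hF hn α hα]
    have hP : (∀ j : Fin (m + 1), (Fin.cons x0 t : Fin (m + 1) → F) j ≠ (1 : F)) ↔
        (x0 ≠ 1 ∧ ∀ j, t j ≠ 1) := by
      constructor
      · intro h; exact ⟨by simpa using h 0, fun j => by simpa using h j.succ⟩
      · rintro ⟨h0, h⟩ j
        refine Fin.cases ?_ ?_ j
        · simpa using h0
        · intro i; simpa using h i
    have hQ : (∀ j : Fin (m + 1), (Fin.cons x0 t : Fin (m + 1) → F) j ≠ (0 : F)) ↔
        (x0 ≠ 0 ∧ ∀ j, t j ≠ 0) := by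
      constructor
      · intro h; exact ⟨by simpa using h 0, fun j => by simpa using h j.succ⟩
      · rintro ⟨h0, h⟩ j
        refine Fin.cases ?_ ?_ j
        · simpa using h0
        · intro i; simpa using h i
    unfold g
    rw [if_congr hP rfl rfl, if_congr hQ rfl rfl, hzero, Fin.cons_zero]
  calc (Finset.univ.filter (fun x : Fin (m + 1) → F => eval x α = a)).card
      = ∑ x : Fin (m + 1) → F, if eval x α = a then 1 else 0 := Finset.card_filter _ _
    _ = ∑ p : F × (Fin m → F),
          if eval ((Fin.consEquiv fun _ => F) p) α = a then 1 else 0 :=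
        (Equiv.sum_comp (Fin.consEquiv fun _ => F) _).symm
    _ = ∑ t : Fin m → F, ∑ x0 : F,
          if eval ((Fin.consEquiv fun _ => F) (x0, t)) α = a then 1 else 0 := by
        rw [Fintype.sum_prod_type, Finset.sum_comm]
    _ = ∑ t : Fin m → F, N t a := by
        refine Finset.sum_congr rfl fun t _ => ?_
        rw [N, Finset.card_filter]
        refine Finset.sum_congr rfl fun x0 _ => ?_
        have hce : (Fin.consEquiv fun _ : Fin (m + 1) => F) (x0, t) = Fin.cons x0 t := rfl
        rw [hce, hcons x0 t]
    _ = 4 ^ m := sum_N hF a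
    _ = 4 ^ (m + 1 - 1) := by simp
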